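/- If H̃_p(Δ_{-(S∪T)}^{S,T}) ≠ 0, then there exists S' ⊇ S with H̃_p(lk_Δ S') ≠ 0, and there exists R ⊆ [n] and p' ≥ p with H̃_{p'}(Δ_R) ≠ 0. -/

import Mathlib

open Finset

namespace SCx

variable (k : Type) [Field k] {n : ℕ}

/-- An (abstract) simplicial complex on the vertex set `Fin n`:
a set of finsets closed under taking subsets. -/
def IsComplex (Δ : Set (Finset (Fin n))) : Prop :=
  ∀ F ∈ Δ, ∀ G ⊆ F, G ∈ Δ

/-- Simplicial `p`-chains with coefficients in `k`: functions on the faces of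
cardinality `p+1`. -/
abbrev Chains (Δ : Set (Finset (Fin n))) (p : ℤ) : Type :=
  {F : Finset (Fin n) // F ∈ Δ ∧ (F.card : ℤ) = p + 1} → k

open Classical in
/-- The underlying function of the simplicial boundary map, written via its
transpose formula:
`(∂ f) G = ∑_{x : insert x G ∈ Δ} (-1)^{pos of x in insert x G} f (insert x G)`. -/
noncomputable def boundaryFun (Δ : Set (Finset (Fin n))) (p : ℤ)
    (f : Chains k Δ p) : Chains k Δ (p - 1) := fun G => ∑ x : Fin n,
  if h : x ∉ G.1 ∧ insert x G.1 ∈ Δ then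
    (-1 : k) ^ (G.1.filter (fun y => y < x)).card *
      f ⟨insert x G.1, h.2, by
        have hc := G.2.2
        rw [Finset.card_insert_of_notMem h.1]
        push_cast at hc ⊢
        omega⟩
  else 0

/-- The simplicial boundary map. -/
noncomputable def boundary (Δ : Set (Finset (Fin n))) (p : ℤ) :
    Chains k Δ p →ₗ[k] Chains k Δ (p - 1) where
  toFun := boundaryFun k Δ p
  map_add' f g := by
    funext G
    unfold boundaryFun
    rw [Pi.add_apply]
    rw [← Finset.sum_add_distrib]
    refine Finset.sum_congr rfl fun x _ => ?_
    split_ifs with h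
    · rw [Pi.add_apply]; ring
    · rw [add_zero]
  map_smul' c f := by
    funext G
    unfold boundaryFun
    simp only [RingHom.id_apply, Pi.smul_apply, smul_eq_mul, Finset.mul_sum]
    refine Finset.sum_congr rfl fun x _ => ?_
    split_ifs with h
    · ring
    · rw [mul_zero]

/-- Transport of chains along an equality of degrees. -/
noncomputable def chainsCongr (Δ : Set (Finset (Fin n))) {p q : ℤ} (h : p = q) :
    Chains k Δ p ≃ₗ[k] Chains k Δ q := by
  subst h; exact LinearEquiv.refl k _

noncomputable def cycles (Δ : Set (Finset (Fin n))) (p : ℤ) : Submodule k (Chains k Δ p) :=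
  LinearMap.ker (boundary k Δ p)

noncomputable def boundaries (Δ : Set (Finset (Fin n))) (p : ℤ) : Submodule k (Chains k Δ p) :=
  LinearMap.range ((chainsCongr k Δ (show p + 1 - 1 = p by ring)).toLinearMap ∘ₗ
    boundary k Δ (p + 1))

/-- Reduced simplicial homology of `Δ` in degree `p`, with coefficients in the field `k`,
defined as cycles modulo (boundaries intersected with cycles).  With this convention
`H̃_{-1}({∅}) = k`. -/
abbrev ReducedHomology (Δ : Set (Finset (Fin n))) (p : ℤ) :=
  ↥(cycles k Δ p) ⧸ (Submodule.comap (cycles k Δ p).subtype (boundaries k Δ p))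

/-- The Alexander dual of `Δ`. -/
def dual (Δ : Set (Finset (Fin n))) : Set (Finset (Fin n)) := {F | Fᶜ ∉ Δ}

/-- The restriction `Δ_R` of `Δ` to a vertex subset `R`. -/
def restrict (Δ : Set (Finset (Fin n))) (R : Finset (Fin n)) : Set (Finset (Fin n)) :=
  {F | F ∈ Δ ∧ F ⊆ R}

/-- The link `lk_Δ S`. -/
def link (Δ : Set (Finset (Fin n))) (S : Finset (Fin n)) : Set (Finset (Fin n)) :=
  {F | Disjoint F S ∧ F ∪ S ∈ Δ}

/-- `Δ_R^{S,T} = {F ⊆ R : F ∪ S ∈ Δ}` (for `T` the complement of `R ∪ S`). -/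
def sub (Δ : Set (Finset (Fin n))) (R S : Finset (Fin n)) : Set (Finset (Fin n)) :=
  {F | F ⊆ R ∧ F ∪ S ∈ Δ}

/-- `Δ` has dimension `d - 1`, i.e. `d` is the maximal cardinality of a face. -/
def IsDim (Δ : Set (Finset (Fin n))) (d : ℕ) : Prop :=
  (∀ F ∈ Δ, F.card ≤ d) ∧ ∃ F ∈ Δ, F.card = d

/-- `Δ` has frame dimension `c - 1`, i.e. `c` is the largest integer such that
every `c`-subset of `[n]` is a face of `Δ`. -/
def IsFrame (Δ : Set (Finset (Fin n))) (c : ℕ) : Prop :=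
  (∀ F : Finset (Fin n), F.card ≤ c → F ∈ Δ) ∧
    ∃ F : Finset (Fin n), F.card = c + 1 ∧ F ∉ Δ

/-- A facet: a maximal face. -/
def IsFacet (Δ : Set (Finset (Fin n))) (F : Finset (Fin n)) : Prop :=
  F ∈ Δ ∧ ∀ G ∈ Δ, F ⊆ G → F = G

/-! ### Auxiliary machinery: boundary operator on global functions -/

open Classical

/-- Boundary-type operator acting on global functions on `Finset (Fin n)`. -/
noncomputable def B (Δ : Set (Finset (Fin n))) (f : Finset (Fin n) → k) :
    Finset (Fin n) → k := fun G => ∑ x : Fin n,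
  if x ∉ G ∧ insert x G ∈ Δ then
    (-1 : k) ^ (G.filter (fun y => y < x)).card * f (insert x G)
  else 0

/-- `f` is supported on faces of `Δ` of cardinality `q`. -/
abbrev Supp (Δ : Set (Finset (Fin n))) (q : ℤ) (f : Finset (Fin n) → k) : Prop :=
  ∀ F, f F ≠ 0 → F ∈ Δ ∧ (F.card : ℤ) = q

/-- Nontriviality of reduced homology, expressed concretely. -/
abbrev NT (Δ : Set (Finset (Fin n))) (p : ℤ) : Prop :=
  ∃ f, Supp k Δ (p + 1) f ∧ B k Δ f = 0 ∧
    ∀ g, Supp k Δ (p + 2) g → B k Δ g ≠ f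

variable {k}

lemma neg_one_pow_mul_self {m : ℕ} {a : k} : (-1 : k) ^ m * ((-1 : k) ^ m * a) = a := by
  rw [← mul_assoc, ← mul_pow]; norm_num

lemma chainsCongr_apply (Δ : Set (Finset (Fin n))) {p q : ℤ} (h : p = q)
    (f : Chains k Δ p) (F : Finset (Fin n)) (hF : F ∈ Δ)
    (h1 : (F.card : ℤ) = q + 1) (h2 : (F.card : ℤ) = p + 1) :
    chainsCongr k Δ h f ⟨F, hF, h1⟩ = f ⟨F, hF, h2⟩ := by
  subst h; rfl

lemma boundary_apply (Δ : Set (Finset (Fin n))) (p : ℤ) (f : Chains k Δ p)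
    (G : Finset (Fin n)) (hG : G ∈ Δ) (hc : (G.card : ℤ) = p - 1 + 1) :
    boundary k Δ p f ⟨G, hG, hc⟩ =
      B k Δ (fun F => if h : F ∈ Δ ∧ (F.card : ℤ) = p + 1 then f ⟨F, h⟩ else 0) G := by
  show boundaryFun k Δ p f ⟨G, hG, hc⟩ = _
  unfold boundaryFun B
  refine Finset.sum_congr rfl fun x _ => ?_
  by_cases h : x ∉ G ∧ insert x G ∈ Δ
  · have hins : insert x G ∈ Δ ∧ ((insert x G).card : ℤ) = p + 1 := by
      refine ⟨h.2, ?_⟩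
      rw [Finset.card_insert_of_notMem h.1]; push_cast; omega
    rw [dif_pos h, if_pos h]
    have e : (fun F => if h : F ∈ Δ ∧ (F.card : ℤ) = p + 1 then f ⟨F, h⟩ else 0)
        (insert x G) = f ⟨insert x G, hins⟩ := dif_pos hins
    rw [e]
  · rw [dif_neg h, if_neg h]

lemma B_supp_vanish (Δ : Set (Finset (Fin n))) (hΔ : IsComplex Δ) {q : ℤ}
    {f : Finset (Fin n) → k} (hf : Supp k Δ q f) {G : Finset (Fin n)}
    (hG : ¬ (G ∈ Δ ∧ (G.card : ℤ) + 1 = q)) : B k Δ f G = 0 := by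
  unfold B
  refine Finset.sum_eq_zero fun x _ => ?_
  split_ifs with h
  · rcases eq_or_ne (f (insert x G)) 0 with h0 | h0
    · rw [h0, mul_zero]
    · obtain ⟨hm, hcard⟩ := hf _ h0
      refine absurd ⟨hΔ _ hm G (Finset.subset_insert x G), ?_⟩ hG
      rw [Finset.card_insert_of_notMem h.1] at hcard
      push_cast at hcard ⊢; omega
  · rfl

lemma B_congr_sub {Δ' Δ : Set (Finset (Fin n))} (hsub : Δ' ⊆ Δ)
    {f : Finset (Fin n) → k} (hf : ∀ F, f F ≠ 0 → F ∈ Δ') :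
    B k Δ f = B k Δ' f := by
  funext G
  unfold B
  refine Finset.sum_congr rfl fun x _ => ?_
  rcases eq_or_ne (f (insert x G)) 0 with h0 | h0
  · split_ifs <;> simp [h0]
  · have h1 : insert x G ∈ Δ' := (hf _ h0)
    have h2 : insert x G ∈ Δ := hsub h1
    by_cases hx : x ∉ G
    · rw [if_pos ⟨hx, h2⟩, if_pos ⟨hx, h1⟩]
    · rw [if_neg (fun hc => hx hc.1), if_neg (fun hc => hx hc.1)]

lemma B_vanish_off {Δ : Set (Finset (Fin n))} {t : Fin n}
    {f : Finset (Fin n) → k} (hf : ∀ F, f F ≠ 0 → t ∉ F) {G : Finset (Fin n)}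
    (htG : t ∈ G) : B k Δ f G = 0 := by
  unfold B
  refine Finset.sum_eq_zero fun x _ => ?_
  split_ifs with h
  · rcases eq_or_ne (f (insert x G)) 0 with h0 | h0
    · rw [h0, mul_zero]
    · exact absurd (Finset.mem_insert_of_mem htG) (hf _ h0)
  · rfl

lemma B_add (Δ : Set (Finset (Fin n))) (f g : Finset (Fin n) → k) (G : Finset (Fin n)) :
    B k Δ (fun F => f F + g F) G = B k Δ f G + B k Δ g G := by
  unfold B
  rw [← Finset.sum_add_distrib]
  refine Finset.sum_congr rfl fun x _ => ?_
  split_ifs with h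
  · ring
  · rw [add_zero]

lemma B_sub (Δ : Set (Finset (Fin n))) (f g : Finset (Fin n) → k) (G : Finset (Fin n)) :
    B k Δ (fun F => f F - g F) G = B k Δ f G - B k Δ g G := by
  unfold B
  rw [← Finset.sum_sub_distrib]
  refine Finset.sum_congr rfl fun x _ => ?_
  split_ifs with h
  · ring
  · rw [sub_zero]

lemma B_neg (Δ : Set (Finset (Fin n))) (f : Finset (Fin n) → k) (G : Finset (Fin n)) :
    B k Δ (fun F => -(f F)) G = -(B k Δ f G) := by
  unfold B
  rw [← Finset.sum_neg_distrib]
  refine Finset.sum_congr rfl fun x _ => ?_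
  split_ifs with h
  · ring
  · rw [neg_zero]

lemma B_zero (Δ : Set (Finset (Fin n))) (G : Finset (Fin n)) :
    B k Δ (fun _ => (0 : k)) G = 0 := by
  unfold B
  refine Finset.sum_eq_zero fun x _ => ?_
  split_ifs with h
  · rw [mul_zero]
  · rfl

/-! ### The bridge between `ReducedHomology` and `NT` -/

variable (k)

lemma not_subsingleton_iff_nt (Δ : Set (Finset (Fin n))) (hΔ : IsComplex Δ) (p : ℤ) :
    ¬ Subsingleton (ReducedHomology k Δ p) ↔ NT k Δ p := by
  have h1 : Subsingleton (ReducedHomology k Δ p) ↔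
      ∀ z : Chains k Δ p, boundary k Δ p z = 0 → z ∈ boundaries k Δ p := by
    rw [Submodule.Quotient.subsingleton_iff, Submodule.eq_top_iff']
    constructor
    · intro H z hz
      have := H ⟨z, LinearMap.mem_ker.2 hz⟩
      simpa [Submodule.mem_comap] using this
    · intro H z
      exact Submodule.mem_comap.2 (H z.1 (LinearMap.mem_ker.1 z.2))
  rw [h1]
  push_neg
  constructor
  · rintro ⟨z, hz, hznb⟩
    refine ⟨fun F => if h : F ∈ Δ ∧ (F.card : ℤ) = p + 1 then z ⟨F, h⟩ else 0, ?_, ?_, ?_⟩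
    · intro F hF
      by_cases h : F ∈ Δ ∧ (F.card : ℤ) = p + 1
      · exact h
      · simp only [dif_neg h] at hF; exact absurd rfl hF
    · funext G
      by_cases hG : G ∈ Δ ∧ (G.card : ℤ) + 1 = p + 1
      · have hc : (G.card : ℤ) = p - 1 + 1 := by omega
        rw [← boundary_apply Δ p z G hG.1 hc, hz]
        rfl
      · exact B_supp_vanish Δ hΔ (q := p + 1)
          (fun F hF => by
            by_cases h : F ∈ Δ ∧ (F.card : ℤ) = p + 1
            · exact h
            · simp only [dif_neg h] at hF; exact absurd rfl hF) hG
    · intro g hg hBg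
      apply hznb
      rw [boundaries, LinearMap.mem_range]
      refine ⟨fun F => g F.1, ?_⟩
      funext F
      obtain ⟨F₁, hF1, hF2⟩ := F
      have hc' : (F₁.card : ℤ) = p + 1 - 1 + 1 := by omega
      rw [LinearMap.comp_apply]
      have e1 : (chainsCongr k Δ (show p + 1 - 1 = p by ring)).toLinearMap
            (boundary k Δ (p + 1) (fun F => g F.1)) ⟨F₁, hF1, hF2⟩ =
          boundary k Δ (p + 1) (fun F => g F.1) ⟨F₁, hF1, hc'⟩ :=
        chainsCongr_apply Δ _ _ F₁ hF1 hF2 hc'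
      rw [e1, boundary_apply Δ (p + 1) _ F₁ hF1 hc']
      have e2 : (fun F => if h : F ∈ Δ ∧ (F.card : ℤ) = p + 1 + 1 then
          (fun (H : {F // F ∈ Δ ∧ (F.card : ℤ) = p + 1 + 1}) => g H.1) ⟨F, h⟩ else 0) = g := by
        funext F
        by_cases h : F ∈ Δ ∧ (F.card : ℤ) = p + 1 + 1
        · simp only [dif_pos h]
        · simp only [dif_neg h]
          rcases eq_or_ne (g F) 0 with h0 | h0
          · exact h0.symm
          · obtain ⟨hm, hcard⟩ := hg _ h0
            exact absurd ⟨hm, by omega⟩ h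
      rw [e2, hBg]
      have e3 : (fun F => if h : F ∈ Δ ∧ (F.card : ℤ) = p + 1 then z ⟨F, h⟩ else 0) F₁ =
          z ⟨F₁, hF1, hF2⟩ := dif_pos ⟨hF1, hF2⟩
      exact e3
  · rintro ⟨f, hsupp, hBf, hnb⟩
    refine ⟨fun F => f F.1, ?_, ?_⟩
    · funext G
      obtain ⟨G₁, hG1, hG2⟩ := G
      have e1 : (fun F => if h : F ∈ Δ ∧ (F.card : ℤ) = p + 1 then
          (fun (H : {F // F ∈ Δ ∧ (F.card : ℤ) = p + 1}) => f H.1) ⟨F, h⟩ else 0) = f := by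
        funext F
        by_cases h : F ∈ Δ ∧ (F.card : ℤ) = p + 1
        · simp only [dif_pos h]
        · simp only [dif_neg h]
          rcases eq_or_ne (f F) 0 with h0 | h0
          · exact h0.symm
          · exact absurd (hsupp _ h0) h
      rw [boundary_apply Δ p _ G₁ hG1 hG2, e1, hBf]
      rfl
    · intro hmem
      rw [boundaries, LinearMap.mem_range] at hmem
      obtain ⟨w, hw⟩ := hmem
      refine hnb (fun F => if h : F ∈ Δ ∧ (F.card : ℤ) = p + 1 + 1 then w ⟨F, h⟩ else 0)
        ?_ ?_
      · intro F hF
        by_cases h : F ∈ Δ ∧ (F.card : ℤ) = p + 1 + 1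
        · exact ⟨h.1, by omega⟩
        · simp only [dif_neg h] at hF; exact absurd rfl hF
      · funext F
        by_cases hF : F ∈ Δ ∧ (F.card : ℤ) = p + 1
        · have hc' : (F.card : ℤ) = p + 1 - 1 + 1 := by omega
          rw [← boundary_apply Δ (p + 1) w F hF.1 hc']
          have := congrFun hw ⟨F, hF.1, hF.2⟩
          rw [LinearMap.comp_apply] at this
          have e1 : (chainsCongr k Δ (show p + 1 - 1 = p by ring)).toLinearMap
                (boundary k Δ (p + 1) w) ⟨F, hF.1, hF.2⟩ =
              boundary k Δ (p + 1) w ⟨F, hF.1, hc'⟩ :=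
            chainsCongr_apply Δ _ _ F hF.1 hF.2 hc'
          rw [e1] at this
          exact this
        · rw [B_supp_vanish Δ hΔ (q := p + 2)
            (fun F' hF' => by
              by_cases h : F' ∈ Δ ∧ (F'.card : ℤ) = p + 1 + 1
              · simp only [dif_pos h] at hF'; exact ⟨h.1, by omega⟩
              · simp only [dif_neg h] at hF'; exact absurd rfl hF')
            (fun hc => hF ⟨hc.1, by omega⟩)]
          rcases eq_or_ne (f F) 0 with h0 | h0
          · exact h0.symm
          · exact absurd (hsupp _ h0) hF

/-! ### Link and deletion chain maps -/

variable {k}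

/-- Membership in the restriction to the complement of a vertex. -/
lemma mem_restrict_compl {Δ : Set (Finset (Fin n))} {t : Fin n} {F : Finset (Fin n)} :
    F ∈ restrict Δ {t}ᶜ ↔ F ∈ Δ ∧ t ∉ F := by
  unfold restrict
  simp only [Set.mem_setOf_eq, and_congr_right_iff]
  intro _
  constructor
  · intro h ht
    have := h ht
    simp at this
  · intro h y hy
    simp only [Finset.mem_compl, Finset.mem_singleton]
    rintro rfl; exact h hy

lemma mem_link_singleton {Δ : Set (Finset (Fin n))} {t : Fin n} {F : Finset (Fin n)} :
    F ∈ link Δ {t} ↔ t ∉ F ∧ insert t F ∈ Δ := by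
  unfold link
  rw [Set.mem_setOf_eq, Finset.disjoint_singleton_right]
  have : F ∪ {t} = insert t F := by ext y; simp [or_comm]
  rw [this]

lemma link_isComplex {Δ : Set (Finset (Fin n))} (hΔ : IsComplex Δ) (S : Finset (Fin n)) :
    IsComplex (link Δ S) := by
  intro F hF G hG
  exact ⟨Finset.disjoint_of_subset_left hG hF.1,
    hΔ _ hF.2 _ (Finset.union_subset_union_left hG)⟩

lemma restrict_isComplex {Δ : Set (Finset (Fin n))} (hΔ : IsComplex Δ) (R : Finset (Fin n)) :
    IsComplex (restrict Δ R) :=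
  fun F hF G hG => ⟨hΔ _ hF.1 _ hG, hG.trans hF.2⟩

lemma sub_isComplex {Δ : Set (Finset (Fin n))} (hΔ : IsComplex Δ) (R S : Finset (Fin n)) :
    IsComplex (sub Δ R S) :=
  fun F hF G hG => ⟨hG.trans hF.1, hΔ _ hF.2 _ (Finset.union_subset_union_left hG)⟩

lemma link_subset_restrict {Δ : Set (Finset (Fin n))} (hΔ : IsComplex Δ) (t : Fin n) :
    link Δ {t} ⊆ restrict Δ {t}ᶜ := by
  intro F hF
  rw [mem_link_singleton] at hF
  exact mem_restrict_compl.2 ⟨hΔ _ hF.2 _ (Finset.subset_insert t F), hF.1⟩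

/-- The `lk t`-component of a chain of `Δ` (faces containing `t`). -/
noncomputable def rho (t : Fin n) (u : Finset (Fin n) → k) : Finset (Fin n) → k :=
  fun F => if t ∈ F then 0
    else (-1 : k) ^ (F.filter (fun y => y < t)).card * u (insert t F)

/-- The cone over a chain of `lk t`. -/
noncomputable def kap (t : Fin n) (z : Finset (Fin n) → k) : Finset (Fin n) → k :=
  fun F => if t ∈ F then
    (-1 : k) ^ ((F.erase t).filter (fun y => y < t)).card * z (F.erase t)
  else 0

lemma rho_off {t : Fin n} {u : Finset (Fin n) → k} :
    ∀ F, rho t u F ≠ 0 → t ∉ F := by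
  intro F hF
  by_cases ht : t ∈ F
  · rw [rho, if_pos ht] at hF; exact absurd rfl hF
  · exact ht

lemma rho_apply {t : Fin n} {u : Finset (Fin n) → k} {F : Finset (Fin n)} (h : t ∉ F) :
    rho t u F = (-1 : k) ^ (F.filter (fun y => y < t)).card * u (insert t F) := if_neg h

lemma filter_lt_card_erase {G : Finset (Fin n)} {t x : Fin n} (ht : t ∈ G) :
    (G.filter (fun y => y < x)).card =
      ((G.erase t).filter (fun y => y < x)).card + (if t < x then 1 else 0) := by
  rw [Finset.filter_erase (p := fun y => y < x) t G]
  by_cases h : t < x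
  · rw [if_pos h]
    have htm : t ∈ G.filter (fun y => y < x) := Finset.mem_filter.2 ⟨ht, h⟩
    have := Finset.card_erase_add_one htm
    omega
  · rw [if_neg h, Finset.erase_eq_of_notMem, add_zero]
    intro hc
    exact h (Finset.mem_filter.1 hc).2

lemma filter_lt_card_insert {G : Finset (Fin n)} {t x : Fin n} (hx : x ∉ G) :
    ((insert x G).filter (fun y => y < t)).card =
      (G.filter (fun y => y < t)).card + (if x < t then 1 else 0) := by
  rw [Finset.filter_insert]
  by_cases h : x < t
  · rw [if_pos h, if_pos h, Finset.card_insert_of_notMem]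
    intro hc
    exact hx (Finset.mem_filter.1 hc).1
  · rw [if_neg h, if_neg h, add_zero]

lemma sign_helper {d b : ℕ} {v : k} {x t : Fin n} (hxt : x ≠ t) :
    (-1 : k) ^ (b + if t < x then 1 else 0) * v =
      -((-1 : k) ^ d * ((-1 : k) ^ b *
        ((-1 : k) ^ (d + if x < t then 1 else 0) * v))) := by
  have key : ((-1 : k)) ^ d * ((-1 : k)) ^ d = 1 := by rw [← mul_pow]; norm_num
  rcases hxt.lt_or_gt with h | h
  · rw [if_neg (asymm h), if_pos h, add_zero, pow_succ]
    linear_combination -((-1 : k) ^ b * v) * key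
  · rw [if_pos h, if_neg (asymm h), add_zero, pow_succ]
    linear_combination ((-1 : k) ^ b * v) * key

/-- Key identity I: on a face containing `t`, the boundary is computed from the link. -/
lemma B_apply_mem (Δ : Set (Finset (Fin n))) (t : Fin n) (u : Finset (Fin n) → k)
    (G : Finset (Fin n)) (htG : t ∈ G) :
    B k Δ u G =
      -((-1 : k) ^ ((G.erase t).filter (fun y => y < t)).card *
        B k (link Δ {t}) (rho t u) (G.erase t)) := by
  unfold B
  rw [Finset.mul_sum, ← Finset.sum_neg_distrib]
  refine Finset.sum_congr rfl fun x _ => ?_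
  by_cases hxt : x = t
  · subst hxt
    rw [if_neg (fun hc => hc.1 htG), if_neg, mul_zero, neg_zero]
    rintro ⟨-, hc⟩
    exact (mem_link_singleton.1 hc).1 (Finset.mem_insert_self x _)
  · by_cases hxG : x ∈ G
    · rw [if_neg (fun hc => hc.1 hxG),
        if_neg (fun hc => hc.1 (Finset.mem_erase.2 ⟨hxt, hxG⟩)), mul_zero, neg_zero]
    · have hcond : (x ∉ G ∧ insert x G ∈ Δ) ↔
          (x ∉ G.erase t ∧ insert x (G.erase t) ∈ link Δ {t}) := by
        rw [mem_link_singleton]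
        constructor
        · rintro ⟨-, h2⟩
          refine ⟨fun hc => hxG (Finset.mem_of_mem_erase hc), ?_, ?_⟩
          · simp [Finset.mem_insert, Finset.mem_erase, Ne.symm hxt]
          · rw [Finset.insert_comm, Finset.insert_erase htG]
            exact h2
        · rintro ⟨-, -, h3⟩
          rw [Finset.insert_comm, Finset.insert_erase htG] at h3
          exact ⟨hxG, h3⟩
      by_cases hc : x ∉ G ∧ insert x G ∈ Δ
      · rw [if_pos hc, if_pos (hcond.1 hc)]
        rw [rho_apply (show t ∉ insert x (G.erase t) by
          simp [Finset.mem_insert, Ne.symm hxt, Finset.mem_erase])]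
        rw [Finset.insert_comm, Finset.insert_erase htG]
        rw [filter_lt_card_erase (x := x) htG, filter_lt_card_insert
          (show x ∉ G.erase t from fun hc' => hxG (Finset.mem_of_mem_erase hc'))]
        exact sign_helper hxt
      · rw [if_neg hc, if_neg (fun h => hc (hcond.2 h)), mul_zero, neg_zero]

/-- Key identity II: on a face not containing `t`, the boundary splits into a
deletion part and a link part. -/
lemma B_apply_not_mem (Δ : Set (Finset (Fin n))) (t : Fin n) (u : Finset (Fin n) → k)
    (hu : ∀ F, u F ≠ 0 → F ∈ Δ) (G : Finset (Fin n)) (htG : t ∉ G) :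
    B k Δ u G =
      B k (restrict Δ {t}ᶜ) (fun F => if t ∈ F then 0 else u F) G + rho t u G := by
  unfold B
  rw [← Finset.add_sum_erase _ _ (Finset.mem_univ t),
    ← Finset.add_sum_erase _ _ (Finset.mem_univ t)]
  have e1 : (if t ∉ G ∧ insert t G ∈ Δ then
      (-1 : k) ^ (G.filter (fun y => y < t)).card * u (insert t G) else 0) = rho t u G := by
    rw [rho_apply htG]
    by_cases h : insert t G ∈ Δ
    · rw [if_pos ⟨htG, h⟩]
    · rw [if_neg (fun hc => h hc.2)]
      rcases eq_or_ne (u (insert t G)) 0 with h0 | h0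
      · rw [h0, mul_zero]
      · exact absurd (hu _ h0) h
  have e2 : (if t ∉ G ∧ insert t G ∈ restrict Δ {t}ᶜ then
      (-1 : k) ^ (G.filter (fun y => y < t)).card *
        (fun F => if t ∈ F then 0 else u F) (insert t G) else 0) = 0 := by
    rw [if_neg]
    rintro ⟨-, hc⟩
    exact (mem_restrict_compl.1 hc).2 (Finset.mem_insert_self t G)
  rw [e1, e2, zero_add]
  rw [add_comm (rho t u G)]
  congr 1
  refine Finset.sum_congr rfl fun x hx => ?_
  have hxt : x ≠ t := Finset.ne_of_mem_erase hx
  have hmem : insert x G ∈ restrict Δ {t}ᶜ ↔ insert x G ∈ Δ := by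
    rw [mem_restrict_compl]
    constructor
    · exact fun h => h.1
    · intro h
      exact ⟨h, by simp [Finset.mem_insert, Ne.symm hxt, htG]⟩
  by_cases hc : x ∉ G ∧ insert x G ∈ Δ
  · rw [if_pos hc, if_pos ⟨hc.1, hmem.2 hc.2⟩]
    have : (fun F => if t ∈ F then 0 else u F) (insert x G) = u (insert x G) := by
      simp only [if_neg (show t ∉ insert x G by
        simp [Finset.mem_insert, Ne.symm hxt, htG])]
    rw [this]
  · rw [if_neg hc, if_neg (fun h => hc ⟨h.1, hmem.1 h.2⟩)]

lemma rho_kap {t : Fin n} {z : Finset (Fin n) → k} (hz : ∀ F, z F ≠ 0 → t ∉ F) :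
    rho t (kap t z) = z := by
  funext F
  by_cases ht : t ∈ F
  · rw [rho, if_pos ht]
    rcases eq_or_ne (z F) 0 with h0 | h0
    · exact h0.symm
    · exact absurd ht (hz _ h0)
  · rw [rho_apply ht, kap, if_pos (Finset.mem_insert_self t F), Finset.erase_insert ht]
    exact neg_one_pow_mul_self

/-! ### The two main homological lemmas -/

lemma lemA (Δ : Set (Finset (Fin n))) (hΔ : IsComplex Δ) (t : Fin n) (p : ℤ)
    (h : NT k (restrict Δ {t}ᶜ) p) : NT k Δ p ∨ NT k (link Δ {t}) p := by
  obtain ⟨z, hzs, hzc, hznb⟩ := h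
  have hDsub : restrict Δ {t}ᶜ ⊆ Δ := fun F hF => (mem_restrict_compl.1 hF).1
  have hLD : link Δ {t} ⊆ restrict Δ {t}ᶜ := link_subset_restrict hΔ t
  have hzoff : ∀ F, z F ≠ 0 → t ∉ F := fun F hF => (mem_restrict_compl.1 (hzs F hF).1).2
  have hzsΔ : Supp k Δ (p + 1) z := fun F hF => ⟨hDsub (hzs F hF).1, (hzs F hF).2⟩
  have hBz : B k Δ z = 0 := by
    rw [B_congr_sub hDsub (fun F hF => (hzs F hF).1)]; exact hzc
  by_cases hb : ∀ g, Supp k Δ (p + 2) g → B k Δ g ≠ z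
  · exact Or.inl ⟨z, hzsΔ, hBz, hb⟩
  push_neg at hb
  obtain ⟨u, hus, hbu⟩ := hb
  right
  refine ⟨rho t u, ?_, ?_, ?_⟩
  · intro F hF
    have htF : t ∉ F := rho_off F hF
    rw [rho_apply htF] at hF
    have hu0 : u (insert t F) ≠ 0 := fun h0 => hF (by rw [h0, mul_zero])
    obtain ⟨hm, hc⟩ := hus _ hu0
    refine ⟨mem_link_singleton.2 ⟨htF, hm⟩, ?_⟩
    rw [Finset.card_insert_of_notMem htF] at hc
    push_cast at hc ⊢; omega
  · funext F
    by_cases htF : t ∈ F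
    · rw [B_vanish_off rho_off htF]; rfl
    · have h1 := B_apply_mem Δ t u (insert t F) (Finset.mem_insert_self t F)
      rw [hbu, Finset.erase_insert htF] at h1
      have h2 : z (insert t F) = 0 := by
        rcases eq_or_ne (z (insert t F)) 0 with h0 | h0
        · exact h0
        · exact absurd (Finset.mem_insert_self t F) (hzoff _ h0)
      rw [h2] at h1
      have h3 := h1.symm
      rw [neg_eq_zero] at h3
      have h4 := mul_eq_zero.1 h3
      rcases h4 with h4 | h4
      · exact absurd h4 (pow_ne_zero _ (by norm_num))
      · rw [h4]; rfl
  · intro w hws hBw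
    refine hznb (fun F => (if t ∈ F then 0 else u F) + w F) ?_ ?_
    · intro F hF
      have hF' : (if t ∈ F then 0 else u F) + w F ≠ 0 := hF
      by_cases hw0 : w F = 0
      · rw [hw0, add_zero] at hF'
        by_cases htF : t ∈ F
        · rw [if_pos htF] at hF'; exact absurd rfl hF'
        · rw [if_neg htF] at hF'
          obtain ⟨hm, hc⟩ := hus _ hF'
          exact ⟨mem_restrict_compl.2 ⟨hm, htF⟩, hc⟩
      · obtain ⟨hm, hc⟩ := hws _ hw0
        exact ⟨hLD hm, hc⟩
    · funext G
      rw [B_add]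
      by_cases htG : t ∈ G
      · have e1 : B k (restrict Δ {t}ᶜ) (fun F => if t ∈ F then 0 else u F) G = 0 :=
          B_vanish_off (fun F hF => by
            by_cases ht : t ∈ F
            · rw [if_pos ht] at hF; exact absurd rfl hF
            · exact ht) htG
        have e2 : B k (restrict Δ {t}ᶜ) w G = 0 :=
          B_vanish_off (fun F hF => (mem_link_singleton.1 (hws F hF).1).1) htG
        have e3 : z G = 0 := by
          rcases eq_or_ne (z G) 0 with h0 | h0
          · exact h0
          · exact absurd htG (hzoff _ h0)
        rw [e1, e2, e3, add_zero]
      · have e1 : B k (restrict Δ {t}ᶜ) w G = rho t u G := by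
          have e0 := congrFun (B_congr_sub hLD (fun F hF => (hws F hF).1)) G
          rw [e0, hBw]
        have e2 := B_apply_not_mem Δ t u (fun F hF => (hus F hF).1) G htG
        rw [hbu] at e2
        rw [e1]
        exact e2.symm

lemma lemB (Δ : Set (Finset (Fin n))) (hΔ : IsComplex Δ) (t : Fin n) (p : ℤ)
    (h : NT k (link Δ {t}) p) : NT k (restrict Δ {t}ᶜ) p ∨ NT k Δ (p + 1) := by
  obtain ⟨z, hzs, hzc, hznb⟩ := h
  have hDsub : restrict Δ {t}ᶜ ⊆ Δ := fun F hF => (mem_restrict_compl.1 hF).1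
  have hLD : link Δ {t} ⊆ restrict Δ {t}ᶜ := link_subset_restrict hΔ t
  have hzoff : ∀ F, z F ≠ 0 → t ∉ F := fun F hF => (mem_link_singleton.1 (hzs F hF).1).1
  have hzsD : Supp k (restrict Δ {t}ᶜ) (p + 1) z := fun F hF => ⟨hLD (hzs F hF).1, (hzs F hF).2⟩
  have hBzD : B k (restrict Δ {t}ᶜ) z = 0 := by
    rw [B_congr_sub hLD (fun F hF => (hzs F hF).1)]; exact hzc
  by_cases hb : ∀ w, Supp k (restrict Δ {t}ᶜ) (p + 2) w → B k (restrict Δ {t}ᶜ) w ≠ z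
  · exact Or.inl ⟨z, hzsD, hBzD, hb⟩
  push_neg at hb
  obtain ⟨w, hws, hBw⟩ := hb
  right
  have hwoff : ∀ F, w F ≠ 0 → t ∉ F := fun F hF => (mem_restrict_compl.1 (hws F hF).1).2
  have hkap : ∀ F, kap t z F ≠ 0 → F ∈ Δ ∧ (F.card : ℤ) = p + 1 + 1 := by
    intro F hF
    by_cases ht : t ∈ F
    · rw [kap, if_pos ht] at hF
      have hz0 : z (F.erase t) ≠ 0 := fun h0 => hF (by rw [h0, mul_zero])
      obtain ⟨hm, hc⟩ := hzs _ hz0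
      have hm2 := (mem_link_singleton.1 hm).2
      rw [Finset.insert_erase ht] at hm2
      have := Finset.card_erase_add_one ht
      refine ⟨hm2, by omega⟩
    · rw [kap, if_neg ht] at hF; exact absurd rfl hF
  refine ⟨fun F => kap t z F - w F, ?_, ?_, ?_⟩
  · intro F hF
    have hF' : kap t z F - w F ≠ 0 := hF
    by_cases hk0 : kap t z F = 0
    · rw [hk0, zero_sub, neg_ne_zero] at hF'
      obtain ⟨hm, hc⟩ := hws _ hF'
      exact ⟨hDsub hm, by omega⟩
    · exact hkap _ hk0
  · funext G
    rw [B_sub]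
    by_cases htG : t ∈ G
    · have e1 : B k Δ (kap t z) G = 0 := by
        rw [B_apply_mem Δ t (kap t z) G htG, rho_kap hzoff]
        have := congrFun hzc (G.erase t)
        rw [show (0 : Finset (Fin n) → k) (G.erase t) = 0 from rfl] at this
        rw [this, mul_zero, neg_zero]
      have e2 : B k Δ w G = 0 := B_vanish_off hwoff htG
      rw [e1, e2, sub_zero]
      rfl
    · have e1 : B k Δ (kap t z) G = z G := by
        rw [B_apply_not_mem Δ t (kap t z) (fun F hF => (hkap F hF).1) G htG]
        have ez : (fun F => if t ∈ F then 0 else kap t z F) = fun _ => (0 : k) := by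
          funext F
          by_cases ht : t ∈ F
          · rw [if_pos ht]
          · rw [if_neg ht, kap, if_neg ht]
        rw [ez, B_zero, zero_add, rho_apply htG, kap,
          if_pos (Finset.mem_insert_self t G), Finset.erase_insert htG]
        exact neg_one_pow_mul_self
      have e2 : B k Δ w G = z G := by
        rw [B_apply_not_mem Δ t w (fun F hF => hDsub (hws F hF).1) G htG]
        have ew : (fun F => if t ∈ F then 0 else w F) = w := by
          funext F
          by_cases ht : t ∈ F
          · rw [if_pos ht]
            rcases eq_or_ne (w F) 0 with h0 | h0
            · exact h0.symm
            · exact absurd ht (hwoff _ h0)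
          · rw [if_neg ht]
        have ew2 : rho t w G = 0 := by
          rw [rho_apply htG]
          rcases eq_or_ne (w (insert t G)) 0 with h0 | h0
          · rw [h0, mul_zero]
          · exact absurd (Finset.mem_insert_self t G) (hwoff _ h0)
        rw [ew, ew2, add_zero, hBw]
      rw [e1, e2, sub_self]
      rfl
  · intro u hus hBu
    refine hznb (fun F => -(rho t u F)) ?_ ?_
    · intro F hF
      rw [neg_ne_zero] at hF
      have htF : t ∉ F := rho_off F hF
      rw [rho_apply htF] at hF
      have hu0 : u (insert t F) ≠ 0 := fun h0 => hF (by rw [h0, mul_zero])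
      obtain ⟨hm, hc⟩ := hus _ hu0
      refine ⟨mem_link_singleton.2 ⟨htF, hm⟩, ?_⟩
      rw [Finset.card_insert_of_notMem htF] at hc
      push_cast at hc ⊢; omega
    · funext F
      rw [B_neg]
      by_cases htF : t ∈ F
      · have e1 : B k (link Δ {t}) (rho t u) F = 0 := B_vanish_off rho_off htF
        have e2 : z F = 0 := by
          rcases eq_or_ne (z F) 0 with h0 | h0
          · exact h0
          · exact absurd htF (hzoff _ h0)
        rw [e1, e2, neg_zero]
      · have h1 := B_apply_mem Δ t u (insert t F) (Finset.mem_insert_self t F)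
        rw [hBu, Finset.erase_insert htF] at h1
        beta_reduce at h1
        have h2 : w (insert t F) = 0 := by
          rcases eq_or_ne (w (insert t F)) 0 with h0 | h0
          · exact h0
          · exact absurd (Finset.mem_insert_self t F) (hwoff _ h0)
        have h3 : kap t z (insert t F) =
            (-1 : k) ^ (F.filter (fun y => y < t)).card * z F := by
          rw [kap, if_pos (Finset.mem_insert_self t F), Finset.erase_insert htF]
        rw [h2, h3, sub_zero] at h1
        -- h1 : (-1)^m * z F = -((-1)^m * B L (rho t u) F)
        have h4 : (-1 : k) ^ (F.filter (fun y => y < t)).card *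
            (-(B k (link Δ {t}) (rho t u) F)) =
            (-1 : k) ^ (F.filter (fun y => y < t)).card * z F := by
          rw [h1]; ring
        have h5 := mul_left_cancel₀ (pow_ne_zero _ (show (-1 : k) ≠ 0 by norm_num)) h4
        exact h5

/-! ### Set identities between links, restrictions and `sub` -/

lemma subset_compl_iff {F S : Finset (Fin n)} : F ⊆ Sᶜ ↔ Disjoint F S := by
  constructor
  · intro h
    rw [Finset.disjoint_left]
    intro a ha
    simpa using h ha
  · intro h a ha
    simp only [Finset.mem_compl]
    exact Finset.disjoint_left.1 h ha

lemma sub_compl_eq_link (Δ : Set (Finset (Fin n))) (S : Finset (Fin n)) :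
    sub Δ Sᶜ S = link Δ S := by
  ext F
  simp only [sub, link, Set.mem_setOf_eq, subset_compl_iff]

lemma restrict_sub_eq (Δ : Set (Finset (Fin n))) (S T : Finset (Fin n)) (t : Fin n)
    (ht : t ∈ T) :
    restrict (sub Δ (S ∪ T.erase t)ᶜ S) {t}ᶜ = sub Δ (S ∪ T)ᶜ S := by
  ext F
  simp only [restrict, sub, Set.mem_setOf_eq, Finset.subset_iff, Finset.mem_compl,
    Finset.mem_union, Finset.mem_erase, Finset.mem_singleton]
  constructor
  · rintro ⟨⟨h1, h2⟩, h3⟩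
    refine ⟨fun a ha => ?_, h2⟩
    have ha1 := h1 ha
    have ha3 := h3 ha
    tauto
  · rintro ⟨h1, h2⟩
    refine ⟨⟨fun a ha => ?_, h2⟩, fun a ha => ?_⟩
    · have := h1 ha; tauto
    · have := h1 ha
      rintro rfl
      exact this (Or.inr ht)

lemma link_sub_eq (Δ : Set (Finset (Fin n))) (S T : Finset (Fin n)) (t : Fin n)
    (ht : t ∈ T) (htS : t ∉ S) :
    link (sub Δ (S ∪ T.erase t)ᶜ S) {t} =
      sub Δ ((insert t S) ∪ T.erase t)ᶜ (insert t S) := by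
  ext F
  simp only [link, sub, Set.mem_setOf_eq, Finset.disjoint_singleton_right]
  have hunion : F ∪ {t} ∪ S = F ∪ insert t S := by
    ext y
    simp only [Finset.mem_union, Finset.mem_singleton, Finset.mem_insert]
    tauto
  rw [hunion]
  constructor
  · rintro ⟨h0, h1, h2⟩
    refine ⟨fun a ha => ?_, h2⟩
    have := h1 (Finset.mem_union_left _ ha)
    have hat : a ≠ t := fun h => h0 (h ▸ ha)
    simp only [Finset.mem_compl, Finset.mem_union, Finset.mem_insert,
      Finset.mem_erase] at this ⊢
    tauto
  · rintro ⟨h1, h2⟩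
    have ht0 : t ∉ F := by
      intro hc
      have := h1 hc
      simp at this
    refine ⟨ht0, fun a ha => ?_, h2⟩
    rcases Finset.mem_union.1 ha with ha | ha
    · have := h1 ha
      simp only [Finset.mem_compl, Finset.mem_union, Finset.mem_insert,
        Finset.mem_erase] at this ⊢
      tauto
    · simp only [Finset.mem_singleton] at ha
      subst ha
      simp only [Finset.mem_compl, Finset.mem_union, Finset.mem_erase]
      rintro (h | h)
      · exact htS h
      · exact h.1 rfl

lemma link_empty (Δ : Set (Finset (Fin n))) : link Δ ∅ = restrict Δ Finset.univ := by
  ext F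
  simp [link, restrict]

lemma link_link (Δ : Set (Finset (Fin n))) (S' : Finset (Fin n)) (v : Fin n)
    (hv : v ∈ S') : link (link Δ {v}) (S'.erase v) = link Δ S' := by
  ext F
  simp only [link, Set.mem_setOf_eq, Finset.disjoint_singleton_right]
  constructor
  · rintro ⟨h1, h2, h3⟩
    have hvF : v ∉ F := fun hc => h2 (Finset.mem_union_left _ hc)
    have hu : F ∪ S'.erase v ∪ {v} = F ∪ S' := by
      ext y
      simp only [Finset.mem_union, Finset.mem_erase, Finset.mem_singleton]
      by_cases hyv : y = v
      · subst hyv; tauto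
      · tauto
    rw [hu] at h3
    refine ⟨?_, h3⟩
    rw [Finset.disjoint_left]
    intro a ha haS
    by_cases hav : a = v
    · exact hvF (hav ▸ ha)
    · exact Finset.disjoint_left.1 h1 ha (Finset.mem_erase.2 ⟨hav, haS⟩)
  · rintro ⟨h1, h2⟩
    have hvF : v ∉ F := fun hc => Finset.disjoint_left.1 h1 hc hv
    have hu : F ∪ S'.erase v ∪ {v} = F ∪ S' := by
      ext y
      simp only [Finset.mem_union, Finset.mem_erase, Finset.mem_singleton]
      by_cases hyv : y = v
      · subst hyv; tauto
      · tauto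
    refine ⟨Finset.disjoint_of_subset_right (Finset.erase_subset v S') h1, ?_, ?_⟩
    · intro hc
      rcases Finset.mem_union.1 hc with hc | hc
      · exact hvF hc
      · exact (Finset.mem_erase.1 hc).1 rfl
    · rw [hu]; exact h2

lemma restrict_link (Δ : Set (Finset (Fin n))) (v : Fin n) (R₀ : Finset (Fin n)) :
    restrict (link Δ {v}) R₀ = link (restrict Δ (insert v (R₀.erase v))) {v} := by
  ext F
  simp only [restrict, link, Set.mem_setOf_eq, Finset.disjoint_singleton_right]
  constructor
  · rintro ⟨⟨hv, hm⟩, hR⟩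
    refine ⟨hv, hm, fun a ha => ?_⟩
    rcases Finset.mem_union.1 ha with ha | ha
    · exact Finset.mem_insert.2 (Or.inr (Finset.mem_erase.2
        ⟨fun h => hv (h ▸ ha), hR ha⟩))
    · simp only [Finset.mem_singleton] at ha
      subst ha
      exact Finset.mem_insert_self _ _
  · rintro ⟨hv, hm, hsub⟩
    refine ⟨⟨hv, hm⟩, fun a ha => ?_⟩
    have := hsub (Finset.mem_union_left _ ha)
    rcases Finset.mem_insert.1 this with h | h
    · exact absurd (h ▸ ha) hv
    · exact Finset.mem_of_mem_erase h

lemma restrict_restrict (Δ : Set (Finset (Fin n))) (v : Fin n) (R₀ : Finset (Fin n)) :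
    restrict (restrict Δ (insert v (R₀.erase v))) {v}ᶜ = restrict Δ (R₀.erase v) := by
  ext F
  simp only [restrict, Set.mem_setOf_eq]
  constructor
  · rintro ⟨⟨hm, h1⟩, h2⟩
    refine ⟨hm, fun a ha => ?_⟩
    have hav : a ≠ v := by
      have := h2 ha
      simpa using this
    rcases Finset.mem_insert.1 (h1 ha) with h | h
    · exact absurd h hav
    · exact h
  · rintro ⟨hm, h1⟩
    refine ⟨⟨hm, fun a ha => Finset.mem_insert.2 (Or.inr (h1 ha))⟩, fun a ha => ?_⟩
    simp only [Finset.mem_compl, Finset.mem_singleton]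
    exact (Finset.mem_erase.1 (h1 ha)).1

/-! ### The two inductions -/

lemma P1 (Δ : Set (Finset (Fin n))) (hΔ : IsComplex Δ) (p : ℤ) :
    ∀ m : ℕ, ∀ S T : Finset (Fin n), T.card = m → Disjoint S T →
      NT k (sub Δ (S ∪ T)ᶜ S) p → ∃ S', S ⊆ S' ∧ NT k (link Δ S') p := by
  intro m
  induction m with
  | zero =>
    intro S T hT hd h
    rw [Finset.card_eq_zero] at hT
    subst hT
    rw [Finset.union_empty, sub_compl_eq_link] at h
    exact ⟨S, subset_rfl, h⟩
  | succ m ih =>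
    intro S T hT hd h
    obtain ⟨t, ht⟩ := Finset.card_pos.1 (show 0 < T.card by omega)
    have htS : t ∉ S := Finset.disjoint_right.1 hd ht
    rw [← restrict_sub_eq Δ S T t ht] at h
    rcases lemA _ (sub_isComplex hΔ _ _) t p h with h2 | h2
    · exact ih S (T.erase t) (by rw [Finset.card_erase_of_mem ht, hT]; omega)
        (Finset.disjoint_of_subset_right (Finset.erase_subset t T) hd) h2
    · rw [link_sub_eq Δ S T t ht htS] at h2
      have hd2 : Disjoint (insert t S) (T.erase t) := by
        rw [Finset.disjoint_left]
        intro a ha hae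
        rcases Finset.mem_insert.1 ha with rfl | ha
        · exact (Finset.mem_erase.1 hae).1 rfl
        · exact Finset.disjoint_left.1 hd ha (Finset.mem_of_mem_erase hae)
      obtain ⟨S', hS', hnt⟩ := ih (insert t S) (T.erase t)
        (by rw [Finset.card_erase_of_mem ht, hT]; omega) hd2 h2
      exact ⟨S', (Finset.subset_insert t S).trans hS', hnt⟩

lemma P2 (p : ℤ) :
    ∀ m : ℕ, ∀ Δ : Set (Finset (Fin n)), IsComplex Δ → ∀ S' : Finset (Fin n),
      S'.card = m → NT k (link Δ S') p →
      ∃ (R : Finset (Fin n)) (p' : ℤ), p ≤ p' ∧ NT k (restrict Δ R) p' := by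
  intro m
  induction m with
  | zero =>
    intro Δ hΔ S' hc h
    rw [Finset.card_eq_zero] at hc
    subst hc
    rw [link_empty] at h
    exact ⟨Finset.univ, p, le_rfl, h⟩
  | succ m ih =>
    intro Δ hΔ S' hc h
    obtain ⟨v, hv⟩ := Finset.card_pos.1 (show 0 < S'.card by omega)
    rw [← link_link Δ S' v hv] at h
    obtain ⟨R₀, p₀, hp₀, hnt⟩ := ih (link Δ {v}) (link_isComplex hΔ _) (S'.erase v)
      (by rw [Finset.card_erase_of_mem hv, hc]; omega) h
    rw [restrict_link] at hnt
    rcases lemB _ (restrict_isComplex hΔ _) v p₀ hnt with h2 | h2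
    · rw [restrict_restrict] at h2
      exact ⟨R₀.erase v, p₀, hp₀, h2⟩
    · exact ⟨insert v (R₀.erase v), p₀ + 1, by omega, h2⟩
/-- if `H̃_p(Δ_{-(S∪T)}^{S,T}) ≠ 0` then some link of an `S' ⊇ S`
has nonzero `H̃_p`, and some restriction has nonzero `H̃_{p'}` with `p' ≥ p`. -/
theorem stmt11 (k : Type) [Field k] {n : ℕ} (Δ : Set (Finset (Fin n)))
    (hΔ : IsComplex Δ) (S T : Finset (Fin n)) (hST : Disjoint S T) (p : ℤ)
    (h : ¬ Subsingleton (ReducedHomology k (sub Δ (S ∪ T)ᶜ S) p)) :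
    (∃ S' : Finset (Fin n), S ⊆ S' ∧
      ¬ Subsingleton (ReducedHomology k (link Δ S') p)) ∧
    (∃ (R : Finset (Fin n)) (p' : ℤ), p ≤ p' ∧
      ¬ Subsingleton (ReducedHomology k (restrict Δ R) p')) := by
  rw [not_subsingleton_iff_nt k _ (sub_isComplex hΔ _ _) p] at h
  obtain ⟨S', hSS', hnt⟩ := P1 Δ hΔ p T.card S T rfl hST h
  obtain ⟨R, p', hp, h2⟩ := P2 p S'.card Δ hΔ S' rfl hnt
  exact ⟨⟨S', hSS', (not_subsingleton_iff_nt k _ (link_isComplex hΔ _) p).2 hnt⟩,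
    ⟨R, p', hp, (not_subsingleton_iff_nt k _ (restrict_isComplex hΔ _) p').2 h2⟩⟩

end SCx
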